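/- Let σ_star(p) = ρ_{A₁B}(p) ⊗ ρ_{A₂C}(p) be the 3-partite pair-entangled-network state on the star graph in which party A holds two qubits A₁ and A₂, A₁ is paired with party B's qubit in a 2-dimensional isotropic state of visibility p, and A₂ is paired with party C's qubit in a 2-dimensional isotropic state of visibility p. If p > 1/√3, then σ_star(p) is genuinely multipartite entangled (i.e., not biseparable) with respect to the tripartition A|B|C. -/

import Mathlib

open scoped BigOperators

noncomputable section

/-- Projector onto the `d`-dimensional maximally entangled state
`|φ⁺_d⟩ = (1/√d) ∑ᵢ |ii⟩`, as a matrix on `ℂ^d ⊗ ℂ^d`. -/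
def phiPlus (d : ℕ) : Matrix (Fin d × Fin d) (Fin d × Fin d) ℂ :=
  fun x y => if x.1 = x.2 ∧ y.1 = y.2 then (1 / (d : ℂ)) else 0

/-- The `d`-dimensional isotropic state with visibility `p`:
`ρ(p) = p φ⁺_d + (1-p) 𝟙/d²`. -/
def iso (d : ℕ) (p : ℝ) : Matrix (Fin d × Fin d) (Fin d × Fin d) ℂ :=
  (p : ℂ) • phiPlus d +
    (((1 - p) / (d : ℝ) ^ 2 : ℝ) : ℂ) • (1 : Matrix (Fin d × Fin d) (Fin d × Fin d) ℂ)

/-- The (possibly unnormalized) projector `|ψ⟩⟨ψ|` onto a vector `ψ`. -/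
def vecProj {ι : Type} (ψ : ι → ℂ) : Matrix ι ι ℂ :=
  fun i j => ψ i * (starRingEnd ℂ) (ψ j)

/-- A pure tripartite vector factors across the bipartition `A|BC`. -/
def factorsA {α β γ : Type} (ψ : α × β × γ → ℂ) : Prop :=
  ∃ (f : α → ℂ) (g : β × γ → ℂ), ∀ a b c, ψ (a, b, c) = f a * g (b, c)

/-- A pure tripartite vector factors across the bipartition `B|AC`. -/
def factorsB {α β γ : Type} (ψ : α × β × γ → ℂ) : Prop :=
  ∃ (f : β → ℂ) (g : α × γ → ℂ), ∀ a b c, ψ (a, b, c) = f b * g (a, c)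

/-- A pure tripartite vector factors across the bipartition `C|AB`. -/
def factorsC {α β γ : Type} (ψ : α × β × γ → ℂ) : Prop :=
  ∃ (f : γ → ℂ) (g : α × β → ℂ), ∀ a b c, ψ (a, b, c) = f c * g (a, b)

/-- A tripartite density matrix (parties `A`, `B`, `C`) is biseparable if it is a finite
convex combination of projectors onto normalized pure states, each of which factors
across one of the three bipartitions `A|BC`, `B|AC`, `C|AB`. -/
def Bisep3 {α β γ : Type} [Fintype α] [Fintype β] [Fintype γ]
    (ρ : Matrix (α × β × γ) (α × β × γ) ℂ) : Prop :=
  ∃ (k : ℕ) (w : Fin k → ℝ) (ψ : Fin k → α × β × γ → ℂ),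
    (∀ t, 0 ≤ w t) ∧ (∑ t, w t = 1) ∧
    (∀ t, factorsA (ψ t) ∨ factorsB (ψ t) ∨ factorsC (ψ t)) ∧
    (∀ t, ∑ x, Complex.normSq (ψ t x) = 1) ∧
    ρ = ∑ t, (w t : ℂ) • vecProj (ψ t)

/-- The 3-partite star PEN state `σ_star(p) = ρ_{A₁B}(p) ⊗ ρ_{A₂C}(p)`.
Party `A` holds the pair `(a₁, a₂)`, party `B` holds `b`, party `C` holds `c`;
the global index is `((a₁, a₂), b, c)`. -/
def sigmaStar (d : ℕ) (p : ℝ) :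
    Matrix ((Fin d × Fin d) × Fin d × Fin d) ((Fin d × Fin d) × Fin d × Fin d) ℂ :=
  fun x y =>
    iso d p (x.1.1, x.2.1) (y.1.1, y.2.1) * iso d p (x.1.2, x.2.2) (y.1.2, y.2.2)

namespace GME
abbrev Q := Fin 2
abbrev Idx := (Q × Q) × Q × Q

def quad (Φ : Idx → ℂ) (M : Matrix Idx Idx ℂ) : ℂ :=
  ∑ x, ∑ y, (starRingEnd ℂ) (Φ x) * M x y * Φ y

def ip (Φ ψ : Idx → ℂ) : ℂ := ∑ x, (starRingEnd ℂ) (Φ x) * ψ x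

def wG : Idx → ℂ := fun x => if x.1.1 = x.2.1 ∧ x.1.2 = x.2.2 then 1 else 0
def w1 (m n : Q) : Idx → ℂ := fun x => if x.1.1 = x.2.1 ∧ x.1.2 = m ∧ x.2.2 = n then 1 else 0
def w2 (m n : Q) : Idx → ℂ := fun x => if x.1.2 = x.2.2 ∧ x.1.1 = m ∧ x.2.1 = n then 1 else 0

def Gv (ψ : Idx → ℂ) : ℝ := Complex.normSq (ip wG ψ) / 4
def F1 (ψ : Idx → ℂ) : ℝ := (∑ m, ∑ n, Complex.normSq (ip (w1 m n) ψ)) / 2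
def F2 (ψ : Idx → ℂ) : ℝ := (∑ m, ∑ n, Complex.normSq (ip (w2 m n) ψ)) / 2

set_option maxHeartbeats 2000000 in
set_option maxRecDepth 100000 in
lemma quad_sigma_G (p : ℝ) : quad wG (sigmaStar 2 p) = ((((1+3*p)/2)^2 : ℝ) : ℂ) := by
  rw [quad]
  simp only [Fintype.sum_prod_type, Fin.sum_univ_two]
  simp only [wG, sigmaStar]
  norm_num [iso, phiPlus, Matrix.one_apply, Matrix.add_apply, Matrix.smul_apply,
    smul_eq_mul, Prod.ext_iff]
  ring

set_option maxHeartbeats 4000000 in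
set_option maxRecDepth 100000 in
lemma quad_sigma_1 (p : ℝ) :
    ∑ m, ∑ n, quad (w1 m n) (sigmaStar 2 p) = (((1+3*p)/2 : ℝ) : ℂ) := by
  simp only [quad]
  simp only [Fintype.sum_prod_type, Fin.sum_univ_two]
  simp only [w1, sigmaStar]
  norm_num [iso, phiPlus, Matrix.one_apply, Matrix.add_apply, Matrix.smul_apply,
    smul_eq_mul, Prod.ext_iff]
  ring

set_option maxHeartbeats 4000000 in
set_option maxRecDepth 100000 in
lemma quad_sigma_2 (p : ℝ) :
    ∑ m, ∑ n, quad (w2 m n) (sigmaStar 2 p) = (((1+3*p)/2 : ℝ) : ℂ) := by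
  simp only [quad]
  simp only [Fintype.sum_prod_type, Fin.sum_univ_two]
  simp only [w2, sigmaStar]
  norm_num [iso, phiPlus, Matrix.one_apply, Matrix.add_apply, Matrix.smul_apply,
    smul_eq_mul, Prod.ext_iff]
  ring

lemma ip_wG (ψ : Idx → ℂ) :
    ip wG ψ = ψ ((0,0),(0,0)) + ψ ((0,1),(0,1)) + ψ ((1,0),(1,0)) + ψ ((1,1),(1,1)) := by
  simp [ip, wG, Fintype.sum_prod_type, Fin.sum_univ_two]
  ring

lemma ip_w1 (m n : Q) (ψ : Idx → ℂ) :
    ip (w1 m n) ψ = ψ ((0,m),(0,n)) + ψ ((1,m),(1,n)) := by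
  fin_cases m <;> fin_cases n <;>
    simp [ip, w1, Fintype.sum_prod_type, Fin.sum_univ_two]

lemma ip_w2 (m n : Q) (ψ : Idx → ℂ) :
    ip (w2 m n) ψ = ψ ((m,0),(n,0)) + ψ ((m,1),(n,1)) := by
  fin_cases m <;> fin_cases n <;>
    simp [ip, w2, Fintype.sum_prod_type, Fin.sum_univ_two]

lemma quad_proj (Φ ψ : Idx → ℂ) :
    quad Φ (vecProj ψ) = (Complex.normSq (ip Φ ψ) : ℂ) := by
  have h : quad Φ (vecProj ψ) = ip Φ ψ * (starRingEnd ℂ) (ip Φ ψ) := by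
    rw [ip, map_sum, Finset.sum_mul_sum]
    unfold quad vecProj
    refine Finset.sum_congr rfl fun x _ => Finset.sum_congr rfl fun y _ => ?_
    simp only [map_mul, Complex.conj_conj]
    ring
  rw [h, Complex.mul_conj]

lemma quad_add (Φ : Idx → ℂ) (M N : Matrix Idx Idx ℂ) :
    quad Φ (M + N) = quad Φ M + quad Φ N := by
  simp only [quad, Matrix.add_apply, mul_add, add_mul, Finset.sum_add_distrib]

lemma quad_smul (Φ : Idx → ℂ) (c : ℂ) (M : Matrix Idx Idx ℂ) :
    quad Φ (c • M) = c * quad Φ M := by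
  simp only [quad, Matrix.smul_apply, smul_eq_mul, Finset.mul_sum]
  refine Finset.sum_congr rfl fun x _ => Finset.sum_congr rfl fun y _ => by ring

lemma quad_sum {k : ℕ} (Φ : Idx → ℂ) (c : Fin k → ℂ) (M : Fin k → Matrix Idx Idx ℂ) :
    quad Φ (∑ t, c t • M t) = ∑ t, c t * quad Φ (M t) := by
  classical
  have h : ∀ (s : Finset (Fin k)),
      quad Φ (∑ t ∈ s, c t • M t) = ∑ t ∈ s, c t * quad Φ (M t) := by
    intro s
    induction s using Finset.induction_on with
    | empty => simp [quad]
    | insert _ _ hx ih =>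
        rw [Finset.sum_insert hx, Finset.sum_insert hx, quad_add, quad_smul, ih]
  exact h Finset.univ

end GME
namespace GME

lemma csC {ι : Type*} [Fintype ι] (a b : ι → ℂ) :
    Complex.normSq (∑ i, a i * b i) ≤
      (∑ i, Complex.normSq (a i)) * (∑ i, Complex.normSq (b i)) := by
  have h1 : ‖∑ i, a i * b i‖ ≤ ∑ i, ‖a i‖ * ‖b i‖ := by
    simpa [map_mul] using norm_sum_le (Finset.univ) (fun i => a i * b i)
  have h2 : (∑ i, ‖a i‖ * ‖b i‖) ^ 2 ≤
      (∑ i, ‖a i‖ ^ 2) * (∑ i, ‖b i‖ ^ 2) :=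
    Finset.sum_mul_sq_le_sq_mul_sq Finset.univ _ _
  have h3 : Complex.normSq (∑ i, a i * b i) ≤
      (∑ i, ‖a i‖ * ‖b i‖) ^ 2 := by
    rw [← Complex.sq_norm]
    exact pow_le_pow_left₀ (norm_nonneg _) h1 2
  calc Complex.normSq (∑ i, a i * b i)
      ≤ (∑ i, ‖a i‖ * ‖b i‖) ^ 2 := h3
    _ ≤ (∑ i, ‖a i‖ ^ 2) * (∑ i, ‖b i‖ ^ 2) := h2
    _ = (∑ i, Complex.normSq (a i)) * (∑ i, Complex.normSq (b i)) := by
        simp [Complex.sq_norm]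

lemma cs2 (a b u v : ℂ) :
    Complex.normSq (a * u + b * v) ≤
      (Complex.normSq a + Complex.normSq b) * (Complex.normSq u + Complex.normSq v) := by
  simpa [Fin.sum_univ_two] using csC (ι := Fin 2) ![a, b] ![u, v]

lemma sqadd (u v : ℂ) :
    Complex.normSq (u + v) ≤ 2 * (Complex.normSq u + Complex.normSq v) := by
  simp only [Complex.normSq_apply, Complex.add_re, Complex.add_im]
  nlinarith [sq_nonneg (u.re - v.re), sq_nonneg (u.im - v.im)]

/-- General: `G ≤ F₁`. -/
lemma Gv_le_F1 (ψ : Idx → ℂ) : Gv ψ ≤ F1 ψ := by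
  have hS : ip wG ψ = ip (w1 0 0) ψ + ip (w1 1 1) ψ := by
    rw [ip_wG, ip_w1, ip_w1]; ring
  have h := sqadd (ip (w1 0 0) ψ) (ip (w1 1 1) ψ)
  rw [← hS] at h
  have hF : F1 ψ = (Complex.normSq (ip (w1 0 0) ψ) + Complex.normSq (ip (w1 0 1) ψ)
      + Complex.normSq (ip (w1 1 0) ψ) + Complex.normSq (ip (w1 1 1) ψ)) / 2 := by
    rw [F1]; simp [Fin.sum_univ_two]; ring
  have n1 : 0 ≤ Complex.normSq (ip (w1 0 1) ψ) := Complex.normSq_nonneg _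
  have n2 : 0 ≤ Complex.normSq (ip (w1 1 0) ψ) := Complex.normSq_nonneg _
  rw [Gv, hF]; linarith

/-- General: `G ≤ F₂`. -/
lemma Gv_le_F2 (ψ : Idx → ℂ) : Gv ψ ≤ F2 ψ := by
  have hS : ip wG ψ = ip (w2 0 0) ψ + ip (w2 1 1) ψ := by
    rw [ip_wG, ip_w2, ip_w2]; ring
  have h := sqadd (ip (w2 0 0) ψ) (ip (w2 1 1) ψ)
  rw [← hS] at h
  have hF : F2 ψ = (Complex.normSq (ip (w2 0 0) ψ) + Complex.normSq (ip (w2 0 1) ψ)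
      + Complex.normSq (ip (w2 1 0) ψ) + Complex.normSq (ip (w2 1 1) ψ)) / 2 := by
    rw [F2]; simp [Fin.sum_univ_two]; ring
  have n1 : 0 ≤ Complex.normSq (ip (w2 0 1) ψ) := Complex.normSq_nonneg _
  have n2 : 0 ≤ Complex.normSq (ip (w2 1 0) ψ) := Complex.normSq_nonneg _
  rw [Gv, hF]; linarith

end GME
namespace GME

lemma boundA (ψ : Idx → ℂ) (hn : ∑ x, Complex.normSq (ψ x) = 1)
    (h : factorsA ψ) : Gv ψ ≤ 1 / 4 := by
  obtain ⟨f, g, hfg⟩ := h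
  have hn' : (∑ a : Q × Q, Complex.normSq (f a)) * (∑ bc : Q × Q, Complex.normSq (g bc)) = 1 := by
    rw [← hn]
    simp only [Fintype.sum_prod_type, Fin.sum_univ_two, hfg, Complex.normSq_mul]
    ring
  have e : ip wG ψ = ∑ a : Q × Q, f a * g a := by
    rw [ip_wG]
    simp only [hfg, Fintype.sum_prod_type, Fin.sum_univ_two]
    ring
  have hcs := csC f g
  rw [← e] at hcs
  rw [Gv]
  linarith [hcs, hn'.le, hn'.ge]

lemma boundB (ψ : Idx → ℂ) (hn : ∑ x, Complex.normSq (ψ x) = 1)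
    (h : factorsB ψ) : Gv ψ ≤ F2 ψ / 2 ∧ F1 ψ ≤ 1 / 2 := by
  obtain ⟨f, g, hfg⟩ := h
  constructor
  · -- Gv ≤ F2 / 2
    have e : ip wG ψ = f 0 * (g ((0,0),0) + g ((0,1),1)) + f 1 * (g ((1,0),0) + g ((1,1),1)) := by
      rw [ip_wG]; simp only [hfg]; ring
    have eF2 : F2 ψ = (Complex.normSq (f 0) + Complex.normSq (f 1)) *
        (Complex.normSq (g ((0,0),0) + g ((0,1),1)) +
         Complex.normSq (g ((1,0),0) + g ((1,1),1))) / 2 := by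
      rw [F2]
      simp only [Fin.sum_univ_two, ip_w2, hfg, ← mul_add, Complex.normSq_mul]
      ring
    have hcs := cs2 (f 0) (f 1) (g ((0,0),0) + g ((0,1),1)) (g ((1,0),0) + g ((1,1),1))
    rw [← e] at hcs
    rw [Gv, eF2]
    linarith
  · -- F1 ≤ 1/2
    have hn' : (Complex.normSq (f 0) + Complex.normSq (f 1)) *
        ((Complex.normSq (g ((0,0),0)) + Complex.normSq (g ((1,0),0)))
        + (Complex.normSq (g ((0,0),1)) + Complex.normSq (g ((1,0),1)))
        + (Complex.normSq (g ((0,1),0)) + Complex.normSq (g ((1,1),0)))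
        + (Complex.normSq (g ((0,1),1)) + Complex.normSq (g ((1,1),1)))) = 1 := by
      rw [← hn]
      simp only [Fintype.sum_prod_type, Fin.sum_univ_two, hfg, Complex.normSq_mul]
      ring
    have eT : ∀ m n : Q, ip (w1 m n) ψ = f 0 * g ((0,m),n) + f 1 * g ((1,m),n) := by
      intro m n; rw [ip_w1]; simp only [hfg]
    have eF1 : F1 ψ = (Complex.normSq (ip (w1 0 0) ψ) + Complex.normSq (ip (w1 0 1) ψ)
        + Complex.normSq (ip (w1 1 0) ψ) + Complex.normSq (ip (w1 1 1) ψ)) / 2 := by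
      rw [F1]; simp [Fin.sum_univ_two]; ring
    have b00 := cs2 (f 0) (f 1) (g ((0,0),0)) (g ((1,0),0))
    have b01 := cs2 (f 0) (f 1) (g ((0,0),1)) (g ((1,0),1))
    have b10 := cs2 (f 0) (f 1) (g ((0,1),0)) (g ((1,1),0))
    have b11 := cs2 (f 0) (f 1) (g ((0,1),1)) (g ((1,1),1))
    rw [← eT 0 0] at b00; rw [← eT 0 1] at b01
    rw [← eT 1 0] at b10; rw [← eT 1 1] at b11
    have hdist : (Complex.normSq (f 0) + Complex.normSq (f 1)) *
          (Complex.normSq (g ((0,0),0)) + Complex.normSq (g ((1,0),0)))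
        + (Complex.normSq (f 0) + Complex.normSq (f 1)) *
          (Complex.normSq (g ((0,0),1)) + Complex.normSq (g ((1,0),1)))
        + (Complex.normSq (f 0) + Complex.normSq (f 1)) *
          (Complex.normSq (g ((0,1),0)) + Complex.normSq (g ((1,1),0)))
        + (Complex.normSq (f 0) + Complex.normSq (f 1)) *
          (Complex.normSq (g ((0,1),1)) + Complex.normSq (g ((1,1),1))) = 1 := by
      rw [← hn']; ring
    rw [eF1]
    linarith

lemma boundC (ψ : Idx → ℂ) (hn : ∑ x, Complex.normSq (ψ x) = 1)
    (h : factorsC ψ) : Gv ψ ≤ F1 ψ / 2 ∧ F2 ψ ≤ 1 / 2 := by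
  obtain ⟨f, g, hfg⟩ := h
  constructor
  · have e : ip wG ψ = f 0 * (g ((0,0),0) + g ((1,0),1)) + f 1 * (g ((0,1),0) + g ((1,1),1)) := by
      rw [ip_wG]; simp only [hfg]; ring
    have eF1 : F1 ψ = (Complex.normSq (f 0) + Complex.normSq (f 1)) *
        (Complex.normSq (g ((0,0),0) + g ((1,0),1)) +
         Complex.normSq (g ((0,1),0) + g ((1,1),1))) / 2 := by
      rw [F1]
      simp only [Fin.sum_univ_two, ip_w1, hfg, ← mul_add, Complex.normSq_mul]
      ring
    have hcs := cs2 (f 0) (f 1) (g ((0,0),0) + g ((1,0),1)) (g ((0,1),0) + g ((1,1),1))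
    rw [← e] at hcs
    rw [Gv, eF1]
    linarith
  · have hn' : (Complex.normSq (f 0) + Complex.normSq (f 1)) *
        ((Complex.normSq (g ((0,0),0)) + Complex.normSq (g ((0,1),0)))
        + (Complex.normSq (g ((0,0),1)) + Complex.normSq (g ((0,1),1)))
        + (Complex.normSq (g ((1,0),0)) + Complex.normSq (g ((1,1),0)))
        + (Complex.normSq (g ((1,0),1)) + Complex.normSq (g ((1,1),1)))) = 1 := by
      rw [← hn]
      simp only [Fintype.sum_prod_type, Fin.sum_univ_two, hfg, Complex.normSq_mul]
      ring
    have eU : ∀ m n : Q, ip (w2 m n) ψ = f 0 * g ((m,0),n) + f 1 * g ((m,1),n) := by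
      intro m n; rw [ip_w2]; simp only [hfg]
    have eF2 : F2 ψ = (Complex.normSq (ip (w2 0 0) ψ) + Complex.normSq (ip (w2 0 1) ψ)
        + Complex.normSq (ip (w2 1 0) ψ) + Complex.normSq (ip (w2 1 1) ψ)) / 2 := by
      rw [F2]; simp [Fin.sum_univ_two]; ring
    have b00 := cs2 (f 0) (f 1) (g ((0,0),0)) (g ((0,1),0))
    have b01 := cs2 (f 0) (f 1) (g ((0,0),1)) (g ((0,1),1))
    have b10 := cs2 (f 0) (f 1) (g ((1,0),0)) (g ((1,1),0))
    have b11 := cs2 (f 0) (f 1) (g ((1,0),1)) (g ((1,1),1))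
    rw [← eU 0 0] at b00; rw [← eU 0 1] at b01
    rw [← eU 1 0] at b10; rw [← eU 1 1] at b11
    have hdist : (Complex.normSq (f 0) + Complex.normSq (f 1)) *
          (Complex.normSq (g ((0,0),0)) + Complex.normSq (g ((0,1),0)))
        + (Complex.normSq (f 0) + Complex.normSq (f 1)) *
          (Complex.normSq (g ((0,0),1)) + Complex.normSq (g ((0,1),1)))
        + (Complex.normSq (f 0) + Complex.normSq (f 1)) *
          (Complex.normSq (g ((1,0),0)) + Complex.normSq (g ((1,1),0)))
        + (Complex.normSq (f 0) + Complex.normSq (f 1)) *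
          (Complex.normSq (g ((1,0),1)) + Complex.normSq (g ((1,1),1))) = 1 := by
      rw [← hn']; ring
    rw [eF2]
    linarith

/-- Key per-component bound. -/
lemma comp_bound (ψ : Idx → ℂ) (hn : ∑ x, Complex.normSq (ψ x) = 1)
    (h : factorsA ψ ∨ factorsB ψ ∨ factorsC ψ) :
    Gv ψ ≤ (F1 ψ + F2 ψ) / 4 + 1 / 8 := by
  have h1 := Gv_le_F1 ψ
  have h2 := Gv_le_F2 ψ
  rcases h with h | h | h
  · have := boundA ψ hn h; linarith
  · obtain ⟨ha, hb⟩ := boundB ψ hn h; linarith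
  · obtain ⟨ha, hb⟩ := boundC ψ hn h; linarith

end GME

open GME

/-- If `p > 1/√3`, then the two-qubit star PEN state `σ_star(p)` is genuinely
multipartite entangled (not biseparable) with respect to the tripartition `A|B|C`. -/
theorem sigmaStar_GME (p : ℝ) (hp1 : p ≤ 1) (hp : 1 / Real.sqrt 3 < p) :
    ¬ Bisep3 (sigmaStar 2 p) := by
  rintro ⟨k, w, ψ, hw, hsw, hfac, hnorm, hσ⟩
  have hG : ∑ t, w t * Complex.normSq (ip wG (ψ t)) = ((1+3*p)/2)^2 := by
    have hc : ((∑ t, w t * Complex.normSq (ip wG (ψ t)) : ℝ) : ℂ)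
        = ((((1+3*p)/2)^2 : ℝ) : ℂ) := by
      rw [← quad_sigma_G p, hσ, quad_sum]
      push_cast
      exact Finset.sum_congr rfl fun t _ => by rw [quad_proj]
    exact_mod_cast hc
  have h1 : ∀ m n : Q, quad (w1 m n) (sigmaStar 2 p)
      = ∑ t, (w t : ℂ) * (Complex.normSq (ip (w1 m n) (ψ t)) : ℂ) := by
    intro m n
    rw [hσ, quad_sum]
    exact Finset.sum_congr rfl fun t _ => by rw [quad_proj]
  have h2 : ∀ m n : Q, quad (w2 m n) (sigmaStar 2 p)
      = ∑ t, (w t : ℂ) * (Complex.normSq (ip (w2 m n) (ψ t)) : ℂ) := by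
    intro m n
    rw [hσ, quad_sum]
    exact Finset.sum_congr rfl fun t _ => by rw [quad_proj]
  have hF1 : ∑ t, w t * (∑ m, ∑ n, Complex.normSq (ip (w1 m n) (ψ t))) = (1+3*p)/2 := by
    have hc : ((∑ t, w t * (∑ m, ∑ n, Complex.normSq (ip (w1 m n) (ψ t))) : ℝ) : ℂ)
        = (((1+3*p)/2 : ℝ) : ℂ) := by
      rw [← quad_sigma_1 p]
      simp only [h1]
      push_cast
      simp only [Finset.mul_sum]
      rw [Finset.sum_comm]
      exact Finset.sum_congr rfl fun m _ => Finset.sum_comm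
    exact_mod_cast hc
  have hF2 : ∑ t, w t * (∑ m, ∑ n, Complex.normSq (ip (w2 m n) (ψ t))) = (1+3*p)/2 := by
    have hc : ((∑ t, w t * (∑ m, ∑ n, Complex.normSq (ip (w2 m n) (ψ t))) : ℝ) : ℂ)
        = (((1+3*p)/2 : ℝ) : ℂ) := by
      rw [← quad_sigma_2 p]
      simp only [h2]
      push_cast
      simp only [Finset.mul_sum]
      rw [Finset.sum_comm]
      exact Finset.sum_congr rfl fun m _ => Finset.sum_comm
    exact_mod_cast hc
  have hGv : ∑ t, w t * Gv (ψ t) = ((1+3*p)/2)^2 / 4 := by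
    have e : ∑ t, w t * Gv (ψ t) = (∑ t, w t * Complex.normSq (ip wG (ψ t))) / 4 := by
      rw [Finset.sum_div]
      exact Finset.sum_congr rfl fun t _ => by rw [Gv]; ring
    rw [e, hG]
  have hF1v : ∑ t, w t * F1 (ψ t) = (1+3*p)/4 := by
    have e : ∑ t, w t * F1 (ψ t)
        = (∑ t, w t * (∑ m, ∑ n, Complex.normSq (ip (w1 m n) (ψ t)))) / 2 := by
      rw [Finset.sum_div]
      exact Finset.sum_congr rfl fun t _ => by rw [F1]; ring
    rw [e, hF1]; ring
  have hF2v : ∑ t, w t * F2 (ψ t) = (1+3*p)/4 := by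
    have e : ∑ t, w t * F2 (ψ t)
        = (∑ t, w t * (∑ m, ∑ n, Complex.normSq (ip (w2 m n) (ψ t)))) / 2 := by
      rw [Finset.sum_div]
      exact Finset.sum_congr rfl fun t _ => by rw [F2]; ring
    rw [e, hF2]; ring
  have key : ∑ t, w t * Gv (ψ t)
      ≤ ∑ t, (w t * F1 (ψ t) / 4 + w t * F2 (ψ t) / 4 + w t / 8) := by
    refine Finset.sum_le_sum fun t _ => ?_
    have hb := comp_bound (ψ t) (hnorm t) (hfac t)
    have h := mul_le_mul_of_nonneg_left hb (hw t)
    linarith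
  have hsplit : ∑ t, (w t * F1 (ψ t) / 4 + w t * F2 (ψ t) / 4 + w t / 8)
      = (∑ t, w t * F1 (ψ t)) / 4 + (∑ t, w t * F2 (ψ t)) / 4 + (∑ t, w t) / 8 := by
    rw [Finset.sum_add_distrib, Finset.sum_add_distrib, ← Finset.sum_div, ← Finset.sum_div,
      ← Finset.sum_div]
  rw [hsplit, hGv, hF1v, hF2v, hsw] at key
  have hs3 : (0:ℝ) < Real.sqrt 3 := Real.sqrt_pos.mpr (by norm_num)
  have hps : 1 < p * Real.sqrt 3 := by
    rw [div_lt_iff₀ hs3] at hp; linarith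
  have hsq : Real.sqrt 3 ^ 2 = 3 := Real.sq_sqrt (by norm_num)
  have hp2 : 1 < 3 * p ^ 2 := by nlinarith [hps, hsq]
  nlinarith [key, hp2]
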